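/- Let K be a field of characteristic 0 and (g, κ) a nontrivial finite-dimensional quadratic Lie algebra over K such that every Lie algebra derivation D : g → g is κ-antisymmetric, i.e. κ(Dx,y) = −κ(x,Dy) for all x,y ∈ g. Then there is no alternating bilinear form θ : g × g → K with κ(x,⁅y,z⁆) = θ(⁅x,y⁆,z) − θ(⁅x,z⁆,y) + θ(⁅y,z⁆,x) for all x,y,z ∈ g; that is, (g,κ) is Cartan-3-regular. -/
import Mathlib


/-- A nontrivial finite-dimensional quadratic Lie algebra `(g, κ)` over a field of
characteristic zero all of whose derivations are `κ`-antisymmetric is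
Cartan-3-regular: the Cartan 3-cocycle `Ω(x,y,z) = κ(x,⁅y,z⁆)` is not a
Chevalley–Eilenberg coboundary of any alternating bilinear form. -/
theorem antisymmetric_derivations_cartan_three_regular
    (K : Type*) [Field K] [CharZero K]
    (g : Type*) [LieRing g] [LieAlgebra K g] [Module.Finite K g] [Nontrivial g]
    (κ : g →ₗ[K] g →ₗ[K] K)
    (hsymm : ∀ x y : g, κ x y = κ y x)
    (hnondeg : ∀ x : g, (∀ y : g, κ x y = 0) → x = 0)
    (hinv : ∀ x y z : g, κ ⁅x, y⁆ z = κ x ⁅y, z⁆)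
    (hanti : ∀ D : g →ₗ[K] g, (∀ x y : g, D ⁅x, y⁆ = ⁅D x, y⁆ + ⁅x, D y⁆) →
        ∀ x y : g, κ (D x) y = - κ x (D y)) :
    ¬ ∃ θ : g →ₗ[K] g →ₗ[K] K, (∀ x : g, θ x x = 0) ∧
        ∀ x y z : g, κ x ⁅y, z⁆ = θ ⁅x, y⁆ z - θ ⁅x, z⁆ y + θ ⁅y, z⁆ x := by
  rintro ⟨θ, halt, hθ⟩
  -- θ is antisymmetric
  have hθanti : ∀ x y : g, θ x y = - θ y x := by
    intro x y
    have h := halt (x + y)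
    simp only [map_add, LinearMap.add_apply, halt x, halt y] at h
    linear_combination h
  -- κ, viewed as a map to the dual, is bijective
  have hinj : Function.Injective κ := by
    intro a b hab
    have h0 : ∀ y, κ (a - b) y = 0 := by
      intro y
      rw [map_sub, LinearMap.sub_apply, hab, sub_self]
    exact sub_eq_zero.mp (hnondeg _ h0)
  have hsurj : Function.Surjective κ := by
    have hfr : Module.finrank K g = Module.finrank K (Module.Dual K g) :=
      Subspace.dual_finrank_eq.symm
    exact (LinearMap.injective_iff_surjective_of_finrank_eq_finrank hfr).mp hinj
  let e : g ≃ₗ[K] (g →ₗ[K] K) := LinearEquiv.ofBijective κ ⟨hinj, hsurj⟩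
  -- the map D with κ (D x) = θ x
  let D : g →ₗ[K] g := e.symm.toLinearMap ∘ₗ θ
  have hκD : ∀ x : g, κ (D x) = θ x := fun x => e.apply_symm_apply (θ x)
  have hκD' : ∀ x y : g, κ (D x) y = θ x y := fun x y => by rw [hκD]
  -- D is κ-antisymmetric
  have hDanti : ∀ x y : g, κ (D x) y = - κ x (D y) := by
    intro x y
    rw [hκD', hθanti, hsymm x (D y), hκD']
  -- key identity: D⁅y,z⁆ = ⁅Dy,z⁆ + ⁅y,Dz⁆ + ⁅y,z⁆
  have key : ∀ x y z : g, κ (D ⁅y, z⁆) x =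
      κ (⁅D y, z⁆ + ⁅y, D z⁆ + ⁅y, z⁆) x := by
    intro x y z
    have h1 := hθ x y z
    rw [← hκD' ⁅x, y⁆ z, ← hκD' ⁅x, z⁆ y, ← hκD' ⁅y, z⁆ x] at h1
    have h2 : κ (D ⁅x, y⁆) z = - κ x ⁅y, D z⁆ := by
      rw [hDanti, hinv]
    have h3 : κ (D ⁅x, z⁆) y = - κ x ⁅z, D y⁆ := by
      rw [hDanti, hinv]
    have h4 : κ x ⁅z, D y⁆ = - κ ⁅D y, z⁆ x := by
      rw [hsymm x ⁅z, D y⁆]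
      rw [show (⁅z, D y⁆ : g) = -⁅D y, z⁆ from (lie_skew _ _).symm, map_neg,
        LinearMap.neg_apply]
    have h5 : κ x ⁅y, D z⁆ = κ ⁅y, D z⁆ x := hsymm _ _
    have h6 : κ x ⁅y, z⁆ = κ ⁅y, z⁆ x := hsymm _ _
    rw [map_add, map_add, LinearMap.add_apply, LinearMap.add_apply]
    linear_combination -h1 - h2 + h3 - h4 + h5 + h6
  have hder : ∀ y z : g, D ⁅y, z⁆ = ⁅D y, z⁆ + ⁅y, D z⁆ + ⁅y, z⁆ := by
    intro y z
    have h0 : ∀ x, κ (D ⁅y, z⁆ - (⁅D y, z⁆ + ⁅y, D z⁆ + ⁅y, z⁆)) x = 0 := by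
      intro x
      rw [map_sub, LinearMap.sub_apply, key x y z, sub_self]
    exact sub_eq_zero.mp (hnondeg _ h0)
  -- E = D + id is a derivation
  let E : g →ₗ[K] g := D + LinearMap.id
  have hE : ∀ x y : g, E ⁅x, y⁆ = ⁅E x, y⁆ + ⁅x, E y⁆ := by
    intro x y
    simp only [E, LinearMap.add_apply, LinearMap.id_apply, hder, add_lie, lie_add]
    abel
  -- conclude κ = 0
  have hkzero : ∀ x y : g, κ x y = 0 := by
    intro x y
    have h := hanti E hE x y
    have h' : κ (D x) y + κ x y = -(κ x (D y) + κ x y) := by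
      simpa only [E, LinearMap.add_apply, LinearMap.id_apply, map_add,
        LinearMap.add_apply] using h
    have hD := hDanti x y
    linear_combination (h' - hD) / 2
  obtain ⟨x, hx⟩ := exists_ne (0 : g)
  exact hx (hnondeg x fun y => hkzero x y)
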